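/- arXiv:1302.0116 — 5 statements merged into one kernel-verified Lean document; each statement's English description precedes it below -/
import Mathlib

section
/- Let K be a field of characteristic zero, R = K[X_1,...,X_n], and I an ideal of R with ∂_n(I) ⊆ I (where ∂_n = ∂/∂X_n). Then for any ξ ∈ I, writing ξ = Σ_{j=0}^m c_j X_n^j with c_j ∈ K[X_1,...,X_{n-1}], each coefficient c_j lies in I. -/
open Polynomial in
private lemma stmt2_aux (K : Type*) [Field K] [CharZero K] (m : ℕ)
    (I : Ideal (Polynomial (MvPolynomial (Fin m) K)))
    (hI : ∀ ξ ∈ I, Polynomial.derivative ξ ∈ I) :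
    ∀ n : ℕ, ∀ ξ ∈ I, ξ.natDegree ≤ n → ∀ j, Polynomial.C (ξ.coeff j) ∈ I := by
  intro n
  induction n with
  | zero =>
    intro ξ hξ hd j
    rcases Nat.eq_zero_or_pos j with rfl | hj
    · rw [← Polynomial.eq_C_of_natDegree_le_zero hd]; exact hξ
    · rw [Polynomial.coeff_eq_zero_of_natDegree_lt (lt_of_le_of_lt hd hj)]
      simp
  | succ n ih =>
    intro ξ hξ hd j
    rcases Nat.lt_succ_iff_lt_or_eq.mp (Nat.lt_succ_of_le hd) with h | h
    · exact ih ξ hξ (Nat.lt_succ_iff.mp h) j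
    · -- natDegree ξ = n+1
      have hiter : derivative^[n+1] ξ ∈ I := by
        clear h hd
        induction (n+1) with
        | zero => simpa
        | succ k ihk => rw [Function.iterate_succ_apply']; exact hI _ ihk
      have hdeg0 : (derivative^[n+1] ξ).natDegree = 0 := by
        have := Polynomial.natDegree_iterate_derivative ξ (n+1)
        omega
      have heq : derivative^[n+1] ξ =
          Polynomial.C (((n+1).factorial : MvPolynomial (Fin m) K) * ξ.coeff (n+1)) := by
        rw [Polynomial.eq_C_of_natDegree_le_zero hdeg0.le]
        congr 1
        rw [Polynomial.coeff_iterate_derivative, zero_add, Nat.descFactorial_self,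
          nsmul_eq_mul]
      rw [heq] at hiter
      have hfac : ((((n+1).factorial : K))⁻¹ : K) * ((n+1).factorial : K) = 1 := by
        refine inv_mul_cancel₀ ?_
        exact_mod_cast Nat.cast_ne_zero.mpr (Nat.factorial_ne_zero (n+1))
      have hlead : Polynomial.C (ξ.coeff (n+1)) ∈ I := by
        have := Ideal.mul_mem_left I
          (Polynomial.C (MvPolynomial.C ((((n+1).factorial : K))⁻¹))) hiter
        convert this using 1
        rw [← Polynomial.C_mul]
        congr 1
        have : ((n+1).factorial : MvPolynomial (Fin m) K)
            = MvPolynomial.C (((n+1).factorial : K)) := by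
          simp [MvPolynomial.C_eq_coe_nat]
        rw [this, ← mul_assoc, ← MvPolynomial.C_mul, hfac]
        simp
      set ξ' := ξ - Polynomial.C (ξ.coeff (n+1)) * Polynomial.X ^ (n+1) with hξ'
      have hξ'mem : ξ' ∈ I := I.sub_mem hξ (I.mul_mem_right _ hlead)
      have hcoeff : ∀ k, ξ'.coeff k = if k = n+1 then 0 else ξ.coeff k := by
        intro k
        simp only [hξ', Polynomial.coeff_sub, Polynomial.coeff_C_mul,
          Polynomial.coeff_X_pow]
        split <;> simp_all
      have hd' : ξ'.natDegree ≤ n := by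
        rw [Polynomial.natDegree_le_iff_coeff_eq_zero]
        intro N hN
        rw [hcoeff]
        split
        · rfl
        · exact Polynomial.coeff_eq_zero_of_natDegree_lt (by omega)
      rcases eq_or_ne j (n+1) with rfl | hj
      · exact hlead
      · have := ih ξ' hξ'mem hd' j
        rwa [hcoeff, if_neg hj] at this

/-- If an ideal `I` of `R = K[X_1,...,X_{n-1}][X_n]` is stable under `∂_n`, then the
coefficients (in `K[X_1,...,X_{n-1}]`) of any `ξ ∈ I`, as a polynomial in `X_n`, lie in `I`. -/
theorem stmt2 (K : Type*) [Field K] [CharZero K] (m : ℕ)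
    (I : Ideal (Polynomial (MvPolynomial (Fin m) K)))
    (hI : ∀ ξ ∈ I, Polynomial.derivative ξ ∈ I)
    (ξ : Polynomial (MvPolynomial (Fin m) K)) (hξ : ξ ∈ I) (j : ℕ) :
    Polynomial.C (ξ.coeff j) ∈ I :=
  stmt2_aux K m I hI ξ.natDegree ξ hξ le_rfl j
end

section
/- Let K be a field of characteristic zero, R = K[X_1,...,X_n], and I an ideal of R. Set J = I ∩ K[X_1,...,X_{n-1}]. Then ∂_n(I) ⊆ I if and only if I = J·R (I is extended from K[X_1,...,X_{n-1}]). -/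
open Polynomial

private theorem aux_coeff_mem {K : Type*} [Field K] [CharZero K] {m : ℕ}
    (I : Ideal (Polynomial (MvPolynomial (Fin m) K)))
    (hI : ∀ ξ ∈ I, Polynomial.derivative ξ ∈ I) (ξ : Polynomial (MvPolynomial (Fin m) K))
    (hξ : ξ ∈ I) (d : ℕ) (hd : ξ.natDegree ≤ d) :
    (Polynomial.C (ξ.coeff d) : Polynomial (MvPolynomial (Fin m) K)) ∈ I := by
  have hiter : ∀ k, derivative^[k] ξ ∈ I := by
    intro k; induction k with
    | zero => simpa using hξ
    | succ k ih => rw [Function.iterate_succ_apply']; exact hI _ ih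
  have hdeg : (derivative^[d] ξ).natDegree = 0 := by
    have := ξ.natDegree_iterate_derivative d
    omega
  have heq : derivative^[d] ξ = Polynomial.C ((d.factorial : MvPolynomial (Fin m) K) * ξ.coeff d) := by
    rw [Polynomial.eq_C_of_natDegree_eq_zero hdeg, Polynomial.coeff_iterate_derivative]
    simp [Nat.descFactorial_self, nsmul_eq_mul]
  have h1 : Polynomial.C ((d.factorial : MvPolynomial (Fin m) K) * ξ.coeff d) ∈ I := heq ▸ hiter d
  have hu : IsUnit ((d.factorial : ℕ) : Polynomial (MvPolynomial (Fin m) K)) := by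
    have : ((d.factorial : ℕ) : Polynomial (MvPolynomial (Fin m) K)) =
        algebraMap ℚ _ (d.factorial : ℚ) := by simp
    rw [this]
    exact (IsUnit.mk0 _ (by exact_mod_cast d.factorial_ne_zero)).map _
  obtain ⟨u, hu⟩ := hu
  have : (↑u⁻¹ : Polynomial (MvPolynomial (Fin m) K)) * Polynomial.C ((d.factorial : MvPolynomial (Fin m) K) * ξ.coeff d) ∈ I := I.mul_mem_left _ h1
  convert this using 1
  rw [map_mul, ← mul_assoc, map_natCast (Polynomial.C : MvPolynomial (Fin m) K →+* _) d.factorial]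
  rw [← hu, Units.inv_mul, one_mul]

/-- For an ideal `I` of `R = K[X_1,...,X_{n-1}][X_n]`, with `J = I ∩ K[X_1,...,X_{n-1}]`,
one has `∂_n(I) ⊆ I` iff `I = J·R`. -/
theorem stmt3 (K : Type*) [Field K] [CharZero K] (m : ℕ)
    (I : Ideal (Polynomial (MvPolynomial (Fin m) K))) :
    (∀ ξ ∈ I, Polynomial.derivative ξ ∈ I) ↔
      I = Ideal.map (Polynomial.C : MvPolynomial (Fin m) K →+* Polynomial (MvPolynomial (Fin m) K))
        (I.comap (Polynomial.C : MvPolynomial (Fin m) K →+* Polynomial (MvPolynomial (Fin m) K))) := by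
  set A := MvPolynomial (Fin m) K
  set f : A →+* Polynomial A := Polynomial.C
  constructor
  · intro hI
    refine le_antisymm ?_ (Ideal.map_comap_le)
    intro ξ hξ
    have H : ∀ n : ℕ, ∀ ξ ∈ I, ξ.natDegree ≤ n → ξ ∈ Ideal.map f (I.comap f) := by
      intro n
      induction n with
      | zero =>
        intro ξ hξ hn
        rw [Polynomial.eq_C_of_natDegree_eq_zero (Nat.le_zero.mp hn)]
        exact Ideal.mem_map_of_mem f (by
          simpa [Ideal.mem_comap, f] using
            (Polynomial.eq_C_of_natDegree_eq_zero (Nat.le_zero.mp hn)) ▸ hξ)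
      | succ n ih =>
        intro ξ hξ hn
        by_cases hle : ξ.natDegree ≤ n
        · exact ih ξ hξ hle
        · have hd : ξ.natDegree = n + 1 := by omega
          have hc : (Polynomial.C ξ.leadingCoeff : Polynomial A) ∈ I :=
            aux_coeff_mem I hI ξ hξ ξ.natDegree le_rfl
          have hterm : (Polynomial.C ξ.leadingCoeff : Polynomial A) * Polynomial.X ^ ξ.natDegree ∈ I :=
            I.mul_mem_right _ hc
          have hη : ξ.eraseLead ∈ I := by
            rw [← Polynomial.self_sub_C_mul_X_pow]
            exact I.sub_mem hξ hterm
          have hηdeg : ξ.eraseLead.natDegree ≤ n := by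
            have := ξ.eraseLead_natDegree_le
            omega
          have h1 : ξ.eraseLead ∈ Ideal.map f (I.comap f) := ih _ hη hηdeg
          have h2 : (Polynomial.C ξ.leadingCoeff : Polynomial A) * Polynomial.X ^ ξ.natDegree ∈
              Ideal.map f (I.comap f) :=
            (Ideal.map f (I.comap f)).mul_mem_right _
              (Ideal.mem_map_of_mem f (by simpa [Ideal.mem_comap, f] using hc))
          have := (Ideal.map f (I.comap f)).add_mem h1 h2
          rwa [Polynomial.eraseLead_add_C_mul_X_pow] at this
    exact H ξ.natDegree ξ hξ le_rfl
  · intro hI ξ hξ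
    rw [hI] at hξ ⊢
    refine Submodule.span_induction
      (p := fun x _ => Polynomial.derivative x ∈ Ideal.map f (I.comap f)) ?_ ?_ ?_ ?_ hξ
    · rintro x ⟨a, _, rfl⟩
      simp [f]
    · simp
    · intro x y _ _ px py
      rw [map_add]
      exact add_mem px py
    · intro r x hx px
      rw [smul_eq_mul, Polynomial.derivative_mul]
      exact add_mem ((Ideal.map f (I.comap f)).mul_mem_left _ hx)
        ((Ideal.map f (I.comap f)).mul_mem_left _ px)
end

section
/- Let K be a field of characteristic zero, R = K[X_1,...,X_n], P a prime ideal of R, and I an ideal with radical √I = P. If ∂_n(I) ⊆ I, then P = (P ∩ K[X_1,...,X_{n-1}])·R. -/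
open Polynomial

section Aux

variable {R : Type*} [CommRing R]

private lemma diff_step (I : Ideal R[X]) (hI : ∀ ξ ∈ I, derivative ξ ∈ I)
    (hu : ∀ k : ℕ, k ≠ 0 → IsUnit ((k : R[X])))
    (f : R[X]) (a b : ℕ) (h : f ^ (a + 1) * (derivative f) ^ (2 * b + 1) ∈ I) :
    f ^ a * (derivative f) ^ (2 * b + 3) ∈ I := by
  have h1 : derivative f * derivative (f ^ (a + 1) * (derivative f) ^ (2 * b + 1))
      - ((2 * b + 1 : ℕ) : R[X]) * derivative (derivative f)
        * (f ^ (a + 1) * (derivative f) ^ (2 * b + 1)) ∈ I :=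
    sub_mem (I.mul_mem_left _ (hI _ h)) (I.mul_mem_left _ h)
  have key : derivative f * derivative (f ^ (a + 1) * (derivative f) ^ (2 * b + 1))
      - ((2 * b + 1 : ℕ) : R[X]) * derivative (derivative f)
        * (f ^ (a + 1) * (derivative f) ^ (2 * b + 1))
      = ((a + 1 : ℕ) : R[X]) * (f ^ a * (derivative f) ^ (2 * b + 3)) := by
    rw [derivative_mul, derivative_pow f, derivative_pow (derivative f)]
    simp only [Nat.add_sub_cancel, C_eq_natCast]
    push_cast
    ring
  rw [key] at h1
  exact (Ideal.unit_mul_mem_iff_mem I (hu (a + 1) (Nat.succ_ne_zero a))).mp h1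

private lemma diff_descend (I : Ideal R[X]) (hI : ∀ ξ ∈ I, derivative ξ ∈ I)
    (hu : ∀ k : ℕ, k ≠ 0 → IsUnit ((k : R[X]))) (f : R[X]) :
    ∀ a b : ℕ, f ^ a * (derivative f) ^ (2 * b + 1) ∈ I →
      (derivative f) ^ (2 * (a + b) + 1) ∈ I := by
  intro a
  induction a with
  | zero => intro b h; simpa using h
  | succ a ih =>
    intro b h
    have h2 := diff_step I hI hu f a b h
    rw [show 2 * b + 3 = 2 * (b + 1) + 1 from by ring] at h2
    have h3 := ih (b + 1) h2
    rwa [show 2 * (a + (b + 1)) + 1 = 2 * (a + 1 + b) + 1 from by ring] at h3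

private lemma radical_diff (I : Ideal R[X]) (hI : ∀ ξ ∈ I, derivative ξ ∈ I)
    (hu : ∀ k : ℕ, k ≠ 0 → IsUnit ((k : R[X]))) :
    ∀ f ∈ I.radical, derivative f ∈ I.radical := by
  intro f hf
  obtain ⟨n, hn⟩ := hf
  cases n with
  | zero =>
    have hT : I = ⊤ := (Ideal.eq_top_iff_one I).mpr (by simpa using hn)
    exact ⟨1, by rw [hT]; trivial⟩
  | succ N =>
    have h0 : f ^ N * derivative f ^ (2 * 0 + 1) ∈ I := by
      have h1 := hI _ hn
      rw [derivative_pow] at h1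
      simp only [Nat.add_sub_cancel, C_eq_natCast] at h1
      rw [mul_assoc] at h1
      have h2 := (Ideal.unit_mul_mem_iff_mem I (hu (N + 1) (Nat.succ_ne_zero N))).mp h1
      simpa using h2
    exact ⟨2 * (N + 0) + 1, diff_descend I hI hu f N 0 h0⟩

private lemma iter_deriv_mem (P : Ideal R[X]) (hPd : ∀ f ∈ P, derivative f ∈ P) :
    ∀ k : ℕ, ∀ f ∈ P, derivative^[k] f ∈ P := by
  intro k
  induction k with
  | zero => intro f hf; simpa using hf
  | succ k ih =>
    intro f hf
    rw [Function.iterate_succ_apply']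
    exact hPd _ (ih f hf)

private lemma coeff_mem (P : Ideal R[X]) (hPd : ∀ f ∈ P, derivative f ∈ P)
    (hu : ∀ k : ℕ, k ≠ 0 → IsUnit ((k : R[X]))) :
    ∀ d : ℕ, ∀ f ∈ P, f.natDegree ≤ d → ∀ n : ℕ, C (f.coeff n) ∈ P := by
  intro d
  induction d with
  | zero =>
    intro f hf hdeg n
    cases n with
    | zero => rwa [← eq_C_of_natDegree_le_zero hdeg]
    | succ n =>
      rw [coeff_eq_zero_of_natDegree_lt (lt_of_le_of_lt hdeg n.succ_pos), map_zero]
      exact P.zero_mem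
  | succ d ih =>
    intro f hf hdeg n
    have hg : derivative^[d + 1] f ∈ P := iter_deriv_mem P hPd (d + 1) f hf
    have hgdeg : (derivative^[d + 1] f).natDegree ≤ 0 :=
      le_trans (natDegree_iterate_derivative f (d + 1)) (by omega)
    have hgeq : derivative^[d + 1] f = C ((derivative^[d + 1] f).coeff 0) :=
      eq_C_of_natDegree_le_zero hgdeg
    have hco : (derivative^[d + 1] f).coeff 0 = (d + 1).factorial • f.coeff (d + 1) := by
      rw [coeff_iterate_derivative, zero_add, Nat.descFactorial_self]
    have hc : C (f.coeff (d + 1)) ∈ P := by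
      have h1 : C ((d + 1).factorial • f.coeff (d + 1)) ∈ P := by
        rw [← hco, ← hgeq]; exact hg
      rw [map_nsmul, nsmul_eq_mul] at h1
      exact (Ideal.unit_mul_mem_iff_mem P (hu _ (Nat.factorial_ne_zero _))).mp h1
    rcases eq_or_ne n (d + 1) with rfl | hne
    · exact hc
    · have hf2P : f - C (f.coeff (d + 1)) * X ^ (d + 1) ∈ P :=
        sub_mem hf (P.mul_mem_right _ hc)
      have hf2deg : (f - C (f.coeff (d + 1)) * X ^ (d + 1)).natDegree ≤ d := by
        rw [natDegree_le_iff_coeff_eq_zero]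
        intro k hk
        simp only [coeff_sub, coeff_C_mul, coeff_X_pow]
        rcases eq_or_ne k (d + 1) with rfl | hk2
        · simp
        · rw [coeff_eq_zero_of_natDegree_lt (lt_of_le_of_lt hdeg (by omega)), if_neg hk2]
          simp
      have hcoeff : f.coeff n = (f - C (f.coeff (d + 1)) * X ^ (d + 1)).coeff n := by
        simp [coeff_sub, coeff_C_mul, coeff_X_pow, if_neg hne]
      rw [hcoeff]
      exact ih _ hf2P hf2deg n

end Aux

/-- If `P` is prime, `√I = P` and `∂_n(I) ⊆ I`, then `P` is extended from
`K[X_1,...,X_{n-1}]`, i.e. `P = (P ∩ K[X_1,...,X_{n-1}])·R`. -/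
theorem stmt4 (K : Type*) [Field K] [CharZero K] (m : ℕ)
    (P I : Ideal (Polynomial (MvPolynomial (Fin m) K)))
    (hP : P.IsPrime) (hrad : I.radical = P)
    (hI : ∀ ξ ∈ I, Polynomial.derivative ξ ∈ I) :
    P = Ideal.map (Polynomial.C : MvPolynomial (Fin m) K →+* Polynomial (MvPolynomial (Fin m) K))
      (P.comap (Polynomial.C : MvPolynomial (Fin m) K →+* Polynomial (MvPolynomial (Fin m) K))) := by
  set A := Polynomial (MvPolynomial (Fin m) K)
  have hu : ∀ k : ℕ, k ≠ 0 → IsUnit ((k : A)) := by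
    intro k hk
    have h1 : IsUnit ((k : K)) := isUnit_iff_ne_zero.mpr (Nat.cast_ne_zero.mpr hk)
    have h2 := h1.map (algebraMap K A)
    rwa [map_natCast] at h2
  have hPd : ∀ f ∈ P, Polynomial.derivative f ∈ P := by
    intro f hf
    rw [← hrad] at hf ⊢
    exact radical_diff I hI hu f hf
  apply le_antisymm
  · intro f hf
    rw [Ideal.mem_map_C_iff]
    intro n
    rw [Ideal.mem_comap]
    exact coeff_mem P hPd hu f.natDegree f hf le_rfl n
  · exact Ideal.map_comap_le
end

section
/- Let K be a field of characteristic zero and O_n = K[[X_1,...,X_n]]. Let I be an ideal of O_n with ∂_n(I) ⊆ I, where ∂_n = ∂/∂X_n. If ξ = Σ_{j≥0} c_j X_n^j ∈ I with each c_j ∈ K[[X_1,...,X_{n-1}]], then every coefficient c_j lies in I. -/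
set_option synthInstance.maxHeartbeats 1000000
set_option maxHeartbeats 1000000

open Finsupp
/-- domCongr as AddEquiv on exponents -/
noncomputable def fdc {σ τ : Type*} (e : σ ≃ τ) : (σ →₀ ℕ) ≃+ (τ →₀ ℕ) :=
  Finsupp.domCongr e

noncomputable def mvReindex {σ τ : Type*} (R : Type*) [CommSemiring R] (e : σ ≃ τ) :
    MvPowerSeries σ R ≃+* MvPowerSeries τ R where
  toFun φ := fun d => φ ((fdc e).symm d)
  invFun ψ := fun d => ψ (fdc e d)
  left_inv φ := by funext d; simp
  right_inv ψ := by funext d; simp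
  map_add' φ ψ := rfl
  map_mul' φ ψ := by
    classical
    funext d
    show MvPowerSeries.coeff ((fdc e).symm d) (φ * ψ) = MvPowerSeries.coeff d (_ * _ : MvPowerSeries τ R)
    rw [MvPowerSeries.coeff_mul]
    erw [MvPowerSeries.coeff_mul]
    refine Finset.sum_nbij' (i := fun p => (fdc e p.1, fdc e p.2))
      (j := fun p => ((fdc e).symm p.1, (fdc e).symm p.2)) ?_ ?_ ?_ ?_ ?_
    · intro p hp
      rw [Finset.HasAntidiagonal.mem_antidiagonal] at hp ⊢
      rw [← map_add, hp, AddEquiv.apply_symm_apply]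
    · intro p hp
      rw [Finset.HasAntidiagonal.mem_antidiagonal] at hp ⊢
      rw [← map_add, hp]
    · intro p _; simp
    · intro p _; simp
    · intro p _
      simp only [MvPowerSeries.coeff_apply]
      change φ p.1 * ψ p.2 = φ ((fdc e).symm (fdc e p.1)) * ψ ((fdc e).symm (fdc e p.2))
      rw [AddEquiv.symm_apply_apply, AddEquiv.symm_apply_apply]

noncomputable def mvSum (σ τ R : Type*) [CommSemiring R] :
    MvPowerSeries (σ ⊕ τ) R ≃+* MvPowerSeries σ (MvPowerSeries τ R) where
  toFun φ := fun a => fun b => φ (Finsupp.sumFinsuppAddEquivProdFinsupp.symm (a, b))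
  invFun Φ := fun d => Φ (Finsupp.sumFinsuppAddEquivProdFinsupp d).1
      (Finsupp.sumFinsuppAddEquivProdFinsupp d).2
  left_inv φ := by
    funext d
    simp only [Prod.mk.eta, AddEquiv.symm_apply_apply]
  right_inv Φ := by
    funext a b
    simp only [AddEquiv.apply_symm_apply]
  map_add' φ ψ := rfl
  map_mul' φ ψ := by
    classical
    funext a b
    show MvPowerSeries.coeff (sumFinsuppAddEquivProdFinsupp.symm (a, b)) (φ * ψ)
      = MvPowerSeries.coeff b (MvPowerSeries.coeff a (_ * _ : MvPowerSeries σ (MvPowerSeries τ R)))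
    erw [MvPowerSeries.coeff_mul (n := a)]
    rw [map_sum, Finset.sum_congr rfl
      (fun p _ => MvPowerSeries.coeff_mul b _ _), MvPowerSeries.coeff_mul]
    rw [← Finset.sum_product']
    refine Finset.sum_nbij'
      (i := fun p => (((sumFinsuppAddEquivProdFinsupp p.1).1,
          (sumFinsuppAddEquivProdFinsupp p.2).1),
          ((sumFinsuppAddEquivProdFinsupp p.1).2, (sumFinsuppAddEquivProdFinsupp p.2).2)))
      (j := fun q => (sumFinsuppAddEquivProdFinsupp.symm (q.1.1, q.2.1),
        sumFinsuppAddEquivProdFinsupp.symm (q.1.2, q.2.2))) ?_ ?_ ?_ ?_ ?_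
    · intro p hp
      rw [Finset.HasAntidiagonal.mem_antidiagonal] at hp
      have h : sumFinsuppAddEquivProdFinsupp p.1 + sumFinsuppAddEquivProdFinsupp p.2
          = (a, b) := by rw [← map_add, hp, AddEquiv.apply_symm_apply]
      simp only [Finset.mem_product, Finset.HasAntidiagonal.mem_antidiagonal]
      exact ⟨by rw [← Prod.fst_add, h], by rw [← Prod.snd_add, h]⟩
    · intro q hq
      simp only [Finset.mem_product, Finset.HasAntidiagonal.mem_antidiagonal] at hq
      rw [Finset.HasAntidiagonal.mem_antidiagonal, ← map_add, Prod.mk_add_mk, hq.1, hq.2]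
    · intro p _
      simp only [Prod.mk.eta, AddEquiv.symm_apply_apply]
    · intro q _
      simp only [AddEquiv.apply_symm_apply]
    · intro p _
      simp only [MvPowerSeries.coeff_apply, Prod.mk.eta, AddEquiv.symm_apply_apply]
      change φ p.1 * ψ p.2 = φ (sumFinsuppAddEquivProdFinsupp.symm ((sumFinsuppAddEquivProdFinsupp p.1).1, (sumFinsuppAddEquivProdFinsupp p.1).2)) * ψ (sumFinsuppAddEquivProdFinsupp.symm ((sumFinsuppAddEquivProdFinsupp p.2).1, (sumFinsuppAddEquivProdFinsupp p.2).2))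
      simp only [Prod.mk.eta, AddEquiv.symm_apply_apply]

noncomputable def mvEmpty (σ R : Type*) [CommSemiring R] [IsEmpty σ] :
    MvPowerSeries σ R ≃+* R where
  toFun := MvPowerSeries.constantCoeff
  invFun := MvPowerSeries.C
  left_inv φ := by
    have hd : ∀ d : σ →₀ ℕ, d = 0 := fun d => by
      ext a; exact isEmptyElim a
    funext d
    show MvPowerSeries.coeff d (MvPowerSeries.C (MvPowerSeries.constantCoeff φ))
      = MvPowerSeries.coeff d φ
    rw [hd d, MvPowerSeries.coeff_zero_C, MvPowerSeries.coeff_zero_eq_constantCoeff]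
  right_inv r := MvPowerSeries.constantCoeff_C r
  map_add' := map_add _
  map_mul' := map_mul _

noncomputable def finSuccPS (K : Type*) [CommSemiring K] (m : ℕ) :
    MvPowerSeries (Fin (m + 1)) K ≃+* PowerSeries (MvPowerSeries (Fin m) K) :=
  ((mvReindex K (((finSuccEquiv m).trans (Equiv.optionEquivSumPUnit _)).trans
    (Equiv.sumComm _ _))).trans (mvSum Unit (Fin m) K))

open PowerSeries

namespace PSNoeth

variable {R : Type*} [CommRing R]

/-- Elements of `𝔞` of order at least `n`, as an `R`-submodule of `R⟦X⟧`. -/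
noncomputable def V (𝔞 : Ideal R⟦X⟧) (n : ℕ) : Submodule R R⟦X⟧ :=
  (𝔞.restrictScalars R) ⊓ (⨅ i ∈ Finset.range n, LinearMap.ker (PowerSeries.coeff i))

theorem mem_V {𝔞 : Ideal R⟦X⟧} {n : ℕ} {f : R⟦X⟧} :
    f ∈ V 𝔞 n ↔ f ∈ 𝔞 ∧ ∀ i < n, PowerSeries.coeff i f = 0 := by
  simp [V, Submodule.mem_iInf]

/-- The ideal of `n`-th coefficients of elements of `𝔞` of order at least `n`. -/
noncomputable def J (𝔞 : Ideal R⟦X⟧) (n : ℕ) : Ideal R :=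
  Submodule.map (PowerSeries.coeff n) (V 𝔞 n)

theorem J_mono (𝔞 : Ideal R⟦X⟧) : Monotone (J 𝔞) := by
  refine monotone_nat_of_le_succ ?_
  rintro n r ⟨f, hf, rfl⟩
  rw [SetLike.mem_coe, mem_V] at hf
  refine ⟨X * f, mem_V.mpr ⟨Ideal.mul_mem_left _ _ hf.1, ?_⟩, coeff_succ_X_mul n f⟩
  intro i hi
  cases i with
  | zero => exact coeff_zero_X_mul f
  | succ j => exact (coeff_succ_X_mul j f).trans (hf.2 j (by omega))


section StepB

variable (N₀ : ℕ) (s : Finset R) (W : R → R⟦X⟧) (g : R⟦X⟧)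

open Classical in
/-- Choose coefficients expressing an element of `span s`. -/
noncomputable def pick (f : R⟦X⟧) (t : ℕ) : R → R :=
  if h : PowerSeries.coeff (N₀ + t) f ∈ Submodule.span R (↑s : Set R) then
    (Submodule.mem_span_finset.mp h).choose else 0

theorem pick_spec {f : R⟦X⟧} {t : ℕ}
    (h : PowerSeries.coeff (N₀ + t) f ∈ Submodule.span R (↑s : Set R)) :
    ∑ x ∈ s, pick N₀ s f t x • x = PowerSeries.coeff (N₀ + t) f := by
  rw [pick, dif_pos h]
  exact (Submodule.mem_span_finset.mp h).choose_spec.2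

/-- The successive remainders. -/
noncomputable def recSeq : ℕ → R⟦X⟧
  | 0 => g
  | (t + 1) => recSeq t - ∑ x ∈ s, pick N₀ s (recSeq t) t x • ((X : R⟦X⟧) ^ t * W x)

variable {N₀ s W g}

theorem recSeq_inv {𝔞 : Ideal R⟦X⟧}
    (hspan : Submodule.span R (↑s : Set R) = J 𝔞 N₀)
    (hstab : ∀ n, N₀ ≤ n → J 𝔞 n = J 𝔞 N₀)
    (hW : ∀ r ∈ s, W r ∈ 𝔞 ∧ (∀ i < N₀, PowerSeries.coeff i (W r) = 0) ∧
      PowerSeries.coeff N₀ (W r) = r)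
    (hg : g ∈ 𝔞) (hord : ∀ i < N₀, PowerSeries.coeff i g = 0) :
    ∀ t, recSeq N₀ s W g t ∈ 𝔞 ∧ ∀ i < N₀ + t, PowerSeries.coeff i (recSeq N₀ s W g t) = 0 := by
  intro t
  induction t with
  | zero => exact ⟨hg, by simpa [recSeq] using hord⟩
  | succ t ih =>
    have hmem : PowerSeries.coeff (N₀ + t) (recSeq N₀ s W g t) ∈
        Submodule.span R (↑s : Set R) := by
      rw [hspan, ← hstab (N₀ + t) (by omega)]
      exact Submodule.mem_map_of_mem (mem_V.mpr ⟨ih.1, ih.2⟩)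
    constructor
    · refine Submodule.sub_mem _ ih.1 (Submodule.sum_mem _ fun x hx => ?_)
      rw [PowerSeries.smul_eq_C_mul]
      exact Ideal.mul_mem_left _ _ (Ideal.mul_mem_left _ _ (hW x hx).1)
    · intro i hi
      rw [recSeq, map_sub, map_sum]
      rcases Nat.lt_succ_iff_lt_or_eq.mp (by omega : i < (N₀ + t) + 1) with hlt | heq
      · rw [ih.2 i hlt, Finset.sum_eq_zero, sub_zero]
        intro x hx
        rw [map_smul, PowerSeries.coeff_X_pow_mul']
        split_ifs with ht
        · rw [(hW x hx).2.1 (i - t) (by omega), smul_zero]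
        · rw [smul_zero]
      · subst heq
        rw [Finset.sum_congr rfl (fun x hx => by
          rw [map_smul, PowerSeries.coeff_X_pow_mul, (hW x hx).2.2]),
          pick_spec _ _ hmem, sub_self]

theorem recSeq_partial :
    ∀ T, g - ∑ x ∈ s, (∑ t ∈ Finset.range T, pick N₀ s (recSeq N₀ s W g t) t x • (X : R⟦X⟧) ^ t)
      * W x = recSeq N₀ s W g T := by
  intro T
  induction T with
  | zero => simp [recSeq]
  | succ T ih =>
    rw [recSeq]
    rw [show (∑ x ∈ s, (∑ t ∈ Finset.range (T + 1),
        pick N₀ s (recSeq N₀ s W g t) t x • (X : R⟦X⟧) ^ t) * W x)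
        = (∑ x ∈ s, ((∑ t ∈ Finset.range T, pick N₀ s (recSeq N₀ s W g t) t x • (X : R⟦X⟧) ^ t)
            * W x + pick N₀ s (recSeq N₀ s W g T) T x • ((X : R⟦X⟧) ^ T * W x))) from
      Finset.sum_congr rfl (fun x _ => by
        rw [Finset.sum_range_succ, add_mul, smul_mul_assoc])]
    rw [Finset.sum_add_distrib, sub_add_eq_sub_sub, ih]

theorem stepB {𝔞 : Ideal R⟦X⟧}
    (hspan : Submodule.span R (↑s : Set R) = J 𝔞 N₀)
    (hstab : ∀ n, N₀ ≤ n → J 𝔞 n = J 𝔞 N₀)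
    (hW : ∀ r ∈ s, W r ∈ 𝔞 ∧ (∀ i < N₀, PowerSeries.coeff i (W r) = 0) ∧
      PowerSeries.coeff N₀ (W r) = r)
    (hg : g ∈ 𝔞) (hord : ∀ i < N₀, PowerSeries.coeff i g = 0) :
    g ∈ Ideal.span (W '' ↑s : Set R⟦X⟧) := by
  have key : g = ∑ x ∈ s, (PowerSeries.mk fun t => pick N₀ s (recSeq N₀ s W g t) t x) * W x := by
    ext d
    have h1 := recSeq_partial (N₀ := N₀) (s := s) (W := W) (g := g) (d + 1)
    have h2 := (recSeq_inv hspan hstab hW hg hord (d + 1)).2 d (by omega)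
    rw [← h1, map_sub] at h2
    have h2' := sub_eq_zero.mp h2
    have h3 : ∀ x ∈ s, PowerSeries.coeff d
        ((PowerSeries.mk fun t => pick N₀ s (recSeq N₀ s W g t) t x) * W x)
        = PowerSeries.coeff d
          ((∑ t ∈ Finset.range (d + 1), pick N₀ s (recSeq N₀ s W g t) t x • (X : R⟦X⟧) ^ t)
            * W x) := by
      intro x _
      rw [← sub_eq_zero, ← map_sub, ← sub_mul]
      have hdvd : (X : R⟦X⟧) ^ (d + 1) ∣
          ((PowerSeries.mk fun t => pick N₀ s (recSeq N₀ s W g t) t x)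
            - ∑ t ∈ Finset.range (d + 1),
                pick N₀ s (recSeq N₀ s W g t) t x • (X : R⟦X⟧) ^ t) := by
        rw [PowerSeries.X_pow_dvd_iff]
        intro m hm
        rw [map_sub, PowerSeries.coeff_mk, map_sum]
        rw [Finset.sum_congr rfl (fun t _ => by
          rw [map_smul, PowerSeries.coeff_X_pow])]
        rw [Finset.sum_eq_single m]
        · simp
        · intro b _ hbm
          simp [if_neg (Ne.symm hbm)]
        · intro hmem
          exact absurd (Finset.mem_range.mpr hm) hmem
      exact PowerSeries.X_pow_dvd_iff.mp (hdvd.mul_right (W x)) d (by omega)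
    rw [h2', map_sum, map_sum, Finset.sum_congr rfl h3]
  rw [key]
  refine Ideal.sum_mem _ fun x hx => Ideal.mul_mem_left _ _ (Ideal.subset_span ?_)
  exact Set.mem_image_of_mem W hx

end StepB


theorem psNoetherian (R : Type*) [CommRing R] [IsNoetherianRing R] :
    IsNoetherianRing R⟦X⟧ := by
  rw [isNoetherianRing_iff_ideal_fg]
  intro 𝔞
  obtain ⟨N₀, hN₀⟩ := monotone_stabilizes_iff_noetherian.mpr
    (inferInstance : IsNoetherian R R) ⟨J 𝔞, J_mono 𝔞⟩
  have hstab : ∀ n, N₀ ≤ n → J 𝔞 n = J 𝔞 N₀ := fun n hn => (hN₀ n hn).symm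
  have hfg : ∀ n, (J 𝔞 n).FG := fun n => IsNoetherian.noetherian _
  choose S hS using hfg
  have hwit : ∀ n, ∀ r ∈ S n, ∃ f, f ∈ 𝔞 ∧ (∀ i < n, PowerSeries.coeff i f = 0) ∧
      PowerSeries.coeff n f = r := by
    intro n r hr
    have : r ∈ J 𝔞 n := by rw [← hS n]; exact Submodule.subset_span hr
    obtain ⟨f, hf, hfr⟩ := Submodule.mem_map.mp this
    rw [mem_V] at hf
    exact ⟨f, hf.1, hf.2, hfr⟩
  choose! W hW1 hW2 hW3 using hwit
  classical
  refine ⟨(Finset.range (N₀ + 1)).biUnion (fun n => (S n).image (W n)), ?_⟩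
  apply le_antisymm
  · rw [Ideal.span_le]
    intro f hf
    rw [Finset.coe_biUnion] at hf
    simp only [Set.mem_iUnion, Finset.coe_image, Set.mem_image, Finset.mem_coe] at hf
    obtain ⟨n, -, r, hr, rfl⟩ := hf
    exact hW1 n r hr
  · intro g hg
    have key : ∀ k, ∀ g : R⟦X⟧, g ∈ 𝔞 → (∀ i < N₀ - k, PowerSeries.coeff i g = 0) →
        g ∈ Ideal.span (↑((Finset.range (N₀ + 1)).biUnion (fun n => (S n).image (W n)))
          : Set R⟦X⟧) := by
      intro k
      induction k with
      | zero =>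
        intro g hg hord
        have h := stepB (s := S N₀) (W := W N₀) (hS N₀) hstab
          (fun r hr => ⟨hW1 N₀ r hr, hW2 N₀ r hr, hW3 N₀ r hr⟩) hg
          (fun i hi => hord i (by omega))
        refine Ideal.span_mono ?_ h
        intro f hf
        obtain ⟨r, hr, rfl⟩ := hf
        rw [Finset.coe_biUnion]
        simp only [Set.mem_iUnion, Finset.coe_image, Set.mem_image, Finset.mem_coe]
        exact ⟨N₀, by simp, r, hr, rfl⟩
      | succ k ih =>
        intro g hg hord
        by_cases hk : N₀ ≤ k
        · exact ih g hg (fun i hi => hord i (by omega))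
        · set n := N₀ - (k + 1) with hn
          have hgJ : PowerSeries.coeff n g ∈ Ideal.span (↑(S n) : Set R) := by
            rw [hS n]
            exact Submodule.mem_map_of_mem (mem_V.mpr ⟨hg, fun i hi => hord i (by omega)⟩)
          obtain ⟨μ, -, hμ⟩ := Submodule.mem_span_finset.mp hgJ
          have hg' : g - ∑ x ∈ S n, μ x • W n x ∈ 𝔞 := by
            refine Submodule.sub_mem _ hg (Submodule.sum_mem _ fun x hx => ?_)
            rw [PowerSeries.smul_eq_C_mul]
            exact Ideal.mul_mem_left _ _ (hW1 n x hx)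
          have hord' : ∀ i < N₀ - k, PowerSeries.coeff i (g - ∑ x ∈ S n, μ x • W n x) = 0 := by
            intro i hi
            have hin : i ≤ n := by omega
            rw [map_sub, map_sum]
            rcases lt_or_eq_of_le hin with hlt | heq
            · rw [hord i hlt, Finset.sum_eq_zero, sub_zero]
              intro x hx
              rw [map_smul, hW2 n x hx i hlt, smul_zero]
            · subst heq
              rw [Finset.sum_congr rfl (fun x hx => by rw [map_smul, hW3 n x hx]), hμ, sub_self]
          have hsum : (∑ x ∈ S n, μ x • W n x) ∈ Ideal.span
              (↑((Finset.range (N₀ + 1)).biUnion (fun n => (S n).image (W n))) : Set R⟦X⟧) := by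
            refine Submodule.sum_mem _ fun x hx => ?_
            rw [PowerSeries.smul_eq_C_mul]
            refine Ideal.mul_mem_left _ _ (Ideal.subset_span ?_)
            rw [Finset.coe_biUnion]
            simp only [Set.mem_iUnion, Finset.coe_image, Set.mem_image, Finset.mem_coe]
            exact ⟨n, by simp [hn], x, hx, rfl⟩
          have := ih _ hg' hord'
          have hfin := Submodule.add_mem _ this hsum
          simpa using hfin
    exact key N₀ g hg (fun i hi => by omega)

end PSNoeth

theorem mvNoetherian (K : Type*) [Field K] (m : ℕ) :
    IsNoetherianRing (MvPowerSeries (Fin m) K) := by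
  induction m with
  | zero => exact isNoetherianRing_of_ringEquiv K (mvEmpty (Fin 0) K).symm
  | succ n ih =>
    have h2 : IsNoetherianRing (PowerSeries (MvPowerSeries (Fin n) K)) :=
      PSNoeth.psNoetherian _
    exact isNoetherianRing_of_ringEquiv _ (finSuccPS K n).symm

section Derivs

variable (R : Type*) [CommRing R]

/-- Derivative as a plain function. -/
noncomputable def DD : R⟦X⟧ → R⟦X⟧ := fun g => PowerSeries.derivative R g

variable {R}

theorem coeff_iterate_derivative (k : ℕ) (f : R⟦X⟧) (n : ℕ) :
    PowerSeries.coeff n ((DD R)^[k] f)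
      = PowerSeries.coeff (n + k) f * ((n + 1).ascFactorial k : R) := by
  induction k generalizing f with
  | zero => simp [Nat.ascFactorial_zero]
  | succ k ih =>
    rw [Function.iterate_succ_apply, ih, show (DD R f) = PowerSeries.derivative R f from rfl,
      PowerSeries.coeff_derivative, Nat.ascFactorial_succ]
    have hnk : n + k + 1 = n + (k + 1) := by omega
    rw [hnk]
    push_cast
    ring

end Derivs

section Main

variable {K : Type*} [Field K] [CharZero K] {m : ℕ}

set_option maxHeartbeats 1000000 in
theorem const_coeff_mem (I : Ideal (PowerSeries (MvPowerSeries (Fin m) K)))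
    (hI : ∀ ξ ∈ I, PowerSeries.derivative (MvPowerSeries (Fin m) K) ξ ∈ I)
    (ζ : PowerSeries (MvPowerSeries (Fin m) K)) (hζ : ζ ∈ I) :
    PowerSeries.C (R := MvPowerSeries (Fin m) K) (PowerSeries.coeff 0 ζ) ∈ I := by
  have hiter : ∀ k, (DD (MvPowerSeries (Fin m) K))^[k] ζ ∈ I := by
    intro k
    induction k with
    | zero => exact hζ
    | succ k ih => rw [Function.iterate_succ_apply']; exact hI _ ih
  -- finite approximations
  have happrox : ∀ N : ℕ, PowerSeries.C (R := MvPowerSeries (Fin m) K) (PowerSeries.coeff 0 ζ)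
      ∈ I ⊔ (Ideal.span {(PowerSeries.X : PowerSeries (MvPowerSeries (Fin m) K))}) ^ N := by
    intro N
    set a : ℕ → K := fun k => (-1) ^ k * ((k.factorial : K))⁻¹ with ha
    set SN : PowerSeries (MvPowerSeries (Fin m) K) := ∑ k ∈ Finset.range N,
      (PowerSeries.C (R := MvPowerSeries (Fin m) K) (MvPowerSeries.C (σ := Fin m) (a k))) *
        ((PowerSeries.X : PowerSeries (MvPowerSeries (Fin m) K)) ^ k
          * (DD (MvPowerSeries (Fin m) K))^[k] ζ) with hSN
    have hSNI : SN ∈ I := Submodule.sum_mem _ fun k _ =>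
      Ideal.mul_mem_left _ _ (Ideal.mul_mem_left _ _ (hiter k))
    have hdvd : (PowerSeries.X : PowerSeries (MvPowerSeries (Fin m) K)) ^ N ∣
        (PowerSeries.C (R := MvPowerSeries (Fin m) K) (PowerSeries.coeff 0 ζ) - SN) := by
      rw [PowerSeries.X_pow_dvd_iff]
      intro n hn
      have hcoeffSN : PowerSeries.coeff n SN
          = MvPowerSeries.C (σ := Fin m) ((if n = 0 then 1 else 0 : K))
            * PowerSeries.coeff n ζ := by
        rw [hSN, map_sum]
        rw [← Finset.sum_subset (Finset.range_subset_range.mpr (show n + 1 ≤ N by omega))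
          (fun k _ hkn => by
            rw [PowerSeries.coeff_C_mul, PowerSeries.coeff_X_pow_mul',
              if_neg (by rw [Finset.mem_range, not_lt] at hkn; omega), mul_zero])]
        have hterm : ∀ k ∈ Finset.range (n + 1),
            PowerSeries.coeff n
              ((PowerSeries.C (R := MvPowerSeries (Fin m) K) (MvPowerSeries.C (σ := Fin m) (a k))) *
              ((PowerSeries.X : PowerSeries (MvPowerSeries (Fin m) K)) ^ k
                * (DD (MvPowerSeries (Fin m) K))^[k] ζ))
            = MvPowerSeries.C (σ := Fin m) (a k * ((n - k + 1).ascFactorial k : K))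
              * PowerSeries.coeff n ζ := by
          intro k hk
          have hkn : k ≤ n := by rw [Finset.mem_range] at hk; omega
          rw [PowerSeries.coeff_C_mul, PowerSeries.coeff_X_pow_mul', if_pos hkn,
            _root_.coeff_iterate_derivative, Nat.sub_add_cancel hkn]
          rw [show (((n - k + 1).ascFactorial k : ℕ) : MvPowerSeries (Fin m) K)
            = MvPowerSeries.C (σ := Fin m) (((n - k + 1).ascFactorial k : ℕ) : K) by
              rw [map_natCast]]
          rw [map_mul _ (a k) (((n - k + 1).ascFactorial k : ℕ) : K)]
          ring
        rw [Finset.sum_congr rfl hterm, ← Finset.sum_mul, ← map_sum]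
        have hval : ∀ k ∈ Finset.range (n + 1),
            a k * ((n - k + 1).ascFactorial k : K) = ((-1 : K)) ^ k * (n.choose k : K) := by
          intro k hk
          have hkn : k ≤ n := by rw [Finset.mem_range] at hk; omega
          simp only [ha]
          rw [Nat.ascFactorial_eq_factorial_mul_choose, Nat.sub_add_cancel hkn]
          push_cast
          rw [mul_assoc, inv_mul_cancel_left₀
            (Nat.cast_ne_zero.mpr (Nat.factorial_ne_zero k))]
        rw [Finset.sum_congr rfl hval]
        have hK := congrArg (Int.cast : ℤ → K) (Int.alternating_sum_range_choose (n := n))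
        push_cast at hK
        rw [hK]
      rw [map_sub, hcoeffSN, PowerSeries.coeff_C]
      split_ifs with h
      · rw [map_one, one_mul]
        subst h
        exact sub_self _
      · rw [map_zero, zero_mul, sub_zero]
    have hmem2 : PowerSeries.C (R := MvPowerSeries (Fin m) K) (PowerSeries.coeff 0 ζ) - SN
        ∈ (Ideal.span {(PowerSeries.X : PowerSeries (MvPowerSeries (Fin m) K))}) ^ N := by
      rw [Ideal.span_singleton_pow, Ideal.mem_span_singleton]
      exact hdvd
    rw [show PowerSeries.C (R := MvPowerSeries (Fin m) K) (PowerSeries.coeff 0 ζ)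
      = SN + (PowerSeries.C (R := MvPowerSeries (Fin m) K) (PowerSeries.coeff 0 ζ) - SN) by ring]
    exact Submodule.add_mem _ (Ideal.mem_sup_left hSNI) (Ideal.mem_sup_right hmem2)
  -- Krull intersection
  by_cases htop : I = ⊤
  · rw [htop]; trivial
  · haveI : IsNoetherianRing (MvPowerSeries (Fin m) K) := mvNoetherian K m
    haveI : IsNoetherianRing (PowerSeries (MvPowerSeries (Fin m) K)) :=
      PSNoeth.psNoetherian _
    haveI : IsNoetherianRing (PowerSeries (MvPowerSeries (Fin m) K) ⧸ I) :=
      isNoetherianRing_of_surjective _ _ (Ideal.Quotient.mk I) Ideal.Quotient.mk_surjective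
    haveI : Nontrivial (PowerSeries (MvPowerSeries (Fin m) K) ⧸ I) :=
      Ideal.Quotient.nontrivial_iff.mpr htop
    haveI : IsLocalRing (PowerSeries (MvPowerSeries (Fin m) K) ⧸ I) :=
      IsLocalRing.of_surjective' (Ideal.Quotient.mk I) Ideal.Quotient.mk_surjective
    set 𝔪 : Ideal (PowerSeries (MvPowerSeries (Fin m) K) ⧸ I) :=
      Ideal.map (Ideal.Quotient.mk I)
        (Ideal.span {(PowerSeries.X : PowerSeries (MvPowerSeries (Fin m) K))}) with h𝔪
    have h𝔪top : 𝔪 ≠ ⊤ := by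
      have hXunit : ¬ IsUnit (Ideal.Quotient.mk I
          (PowerSeries.X : PowerSeries (MvPowerSeries (Fin m) K))) := by
        rintro ⟨u, hu⟩
        obtain ⟨g, hg⟩ := Ideal.Quotient.mk_surjective
          (↑u⁻¹ : PowerSeries (MvPowerSeries (Fin m) K) ⧸ I)
        have hmem : (PowerSeries.X : PowerSeries (MvPowerSeries (Fin m) K)) * g - 1 ∈ I := by
          rw [← Ideal.Quotient.eq_zero_iff_mem, map_sub, map_mul, hg, ← hu,
            Units.mul_inv, map_one, sub_self]
        have hunit : IsUnit ((PowerSeries.X : PowerSeries (MvPowerSeries (Fin m) K)) * g - 1) := by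
          rw [PowerSeries.isUnit_iff_constantCoeff]
          simp only [map_sub, map_mul, map_one, PowerSeries.constantCoeff_X, zero_mul]
          rw [zero_sub]
          exact isUnit_one.neg
        exact htop (I.eq_top_of_isUnit_mem hmem hunit)
      intro hcon
      have hle : 𝔪 ≤ IsLocalRing.maximalIdeal (PowerSeries (MvPowerSeries (Fin m) K) ⧸ I) := by
        rw [h𝔪, Ideal.map_span, Ideal.span_le]
        rintro x ⟨x', hx', rfl⟩
        rw [Set.mem_singleton_iff] at hx'
        subst hx'
        exact hXunit
      exact (IsLocalRing.maximalIdeal.isMaximal _).ne_top (top_le_iff.mp (hcon ▸ hle))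
    have hbot := Ideal.iInf_pow_eq_bot_of_isLocalRing 𝔪 h𝔪top
    have hy : Ideal.Quotient.mk I (PowerSeries.C (R := MvPowerSeries (Fin m) K)
        (PowerSeries.coeff 0 ζ)) ∈ ⨅ n : ℕ, 𝔪 ^ n := by
      rw [Ideal.mem_iInf]
      intro n
      have hmap := Ideal.mem_map_of_mem (Ideal.Quotient.mk I) (happrox n)
      rw [Ideal.map_sup, Ideal.map_quotient_self, bot_sup_eq, Ideal.map_pow] at hmap
      exact hmap
    rw [hbot, Ideal.mem_bot] at hy
    rwa [Ideal.Quotient.eq_zero_iff_mem] at hy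

end Main

/-- If an ideal `I` of `O_n = K[[X_1,...,X_{n-1}]][[X_n]]` is stable under `∂_n`, then all the
coefficients (in `O_{n-1} = K[[X_1,...,X_{n-1}]]`) of any `ξ ∈ I`, as a power series in `X_n`,
lie in `I`. -/
theorem stmt7 (K : Type*) [Field K] [CharZero K] (m : ℕ)
    (I : Ideal (PowerSeries (MvPowerSeries (Fin m) K)))
    (hI : ∀ ξ ∈ I, PowerSeries.derivative (MvPowerSeries (Fin m) K) ξ ∈ I)
    (ξ : PowerSeries (MvPowerSeries (Fin m) K)) (hξ : ξ ∈ I) (j : ℕ) :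
    PowerSeries.C (R := MvPowerSeries (Fin m) K) (PowerSeries.coeff j ξ) ∈ I := by
  have hiter : ∀ k, (DD (MvPowerSeries (Fin m) K))^[k] ξ ∈ I := by
    intro k
    induction k with
    | zero => exact hξ
    | succ k ih => rw [Function.iterate_succ_apply']; exact hI _ ih
  have hc := const_coeff_mem I hI ((DD (MvPowerSeries (Fin m) K))^[j] ξ) (hiter j)
  rw [_root_.coeff_iterate_derivative, Nat.zero_add, Nat.zero_add, Nat.one_ascFactorial, map_mul] at hc
  have hu : IsUnit ((PowerSeries.C (R := MvPowerSeries (Fin m) K))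
      ((j.factorial : MvPowerSeries (Fin m) K))) := by
    rw [show ((j.factorial : MvPowerSeries (Fin m) K))
      = MvPowerSeries.C (σ := Fin m) ((j.factorial : K)) by rw [map_natCast]]
    exact IsUnit.map _ (IsUnit.map _
      (isUnit_iff_ne_zero.mpr (Nat.cast_ne_zero.mpr (Nat.factorial_ne_zero j))))
  rwa [Ideal.mul_unit_mem_iff_mem I hu] at hc
end

section
/- Let A be a Noetherian ring, I an ideal of A, and M an A-module (not necessarily finitely generated). Let Γ_I(M) = { m ∈ M : I^s m = 0 for some s ≥ 0 } be the I-torsion submodule. Then the set of associated primes of M/Γ_I(M) equals { P ∈ Ass_A(M) : P ⊉ I }. -/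
/-- For a Noetherian ring `A`, an ideal `I` and an arbitrary `A`-module `M`, the associated
primes of `M/Γ_I(M)` are exactly the associated primes of `M` not containing `I`. -/
theorem stmt9 (A : Type*) [CommRing A] [IsNoetherianRing A] (I : Ideal A)
    (M : Type*) [AddCommGroup M] [Module A M]
    (Γ : Submodule A M)
    (hΓ : ∀ x : M, x ∈ Γ ↔ ∃ s : ℕ, ∀ a ∈ I ^ s, a • x = 0) :
    associatedPrimes A (M ⧸ Γ) = {P | P ∈ associatedPrimes A M ∧ ¬ I ≤ P} := by
  classical
  -- Key lemma: the quotient M/Γ has no I-torsion, i.e. if I • x ⊆ Γ then x ∈ Γ.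
  have key : ∀ x : M, (∀ a ∈ I, a • x ∈ Γ) → x ∈ Γ := by
    intro x hx
    obtain ⟨T, hT⟩ := IsNoetherian.noetherian I
    have hch : ∀ a ∈ I, ∃ s : ℕ, ∀ c ∈ I ^ s, c • (a • x) = 0 :=
      fun a ha => (hΓ _).mp (hx a ha)
    set f : A → ℕ := fun a => if h : a ∈ I then (hch a h).choose else 0 with hf
    set s := T.sup f with hs
    have main : ∀ r ∈ Submodule.span A (T : Set A), ∀ c ∈ I ^ s, (r * c) • x = 0 := by
      intro r hr
      induction hr using Submodule.span_induction with
      | mem a ha =>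
        have haT : a ∈ T := ha
        have haI : a ∈ I := by rw [← hT]; exact Submodule.subset_span ha
        intro c hc
        have hfa : f a ≤ s := Finset.le_sup haT
        have hc' : c ∈ I ^ (f a) := Ideal.pow_le_pow_right hfa hc
        have hc'' : c ∈ I ^ ((hch a haI).choose) := by
          have hfa' : f a = (hch a haI).choose := dif_pos haI
          rwa [hfa'] at hc'
        have := (hch a haI).choose_spec c hc''
        rw [mul_comm, mul_smul]
        exact this
      | zero => intro c hc; rw [zero_mul, zero_smul]
      | add r₁ r₂ _ _ h₁ h₂ =>
        intro c hc
        rw [add_mul, add_smul, h₁ c hc, h₂ c hc, add_zero]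
      | smul b r _ h =>
        intro c hc
        rw [smul_eq_mul, mul_assoc, mul_smul, h c hc, smul_zero]
    rw [hΓ]
    refine ⟨s + 1, ?_⟩
    intro b hb
    have hb' : b ∈ I * I ^ s := by
      have heq : I ^ (s + 1) = I * I ^ s := by rw [pow_succ, mul_comm]
      rwa [heq] at hb
    refine Submodule.mul_induction_on hb' (fun r hr c hc => ?_) (fun y z hy hz => ?_)
    · exact main r (by rwa [hT]) c hc
    · rw [add_smul, hy, hz, add_zero]
  ext P
  simp only [Set.mem_setOf_eq]
  simp only [associatedPrimes, Set.mem_setOf_eq, isAssociatedPrime_iff]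
  constructor
  · rintro ⟨hPp, x', hx'⟩
    obtain ⟨x, rfl⟩ := Submodule.Quotient.mk_surjective Γ x'
    -- torsion of elements of P
    have htor : ∀ b ∈ P, b • x ∈ Γ := by
      intro b hb
      rw [hx', Submodule.mem_colon_singleton, Submodule.mem_bot] at hb
      rw [← Submodule.Quotient.mk_eq_zero, Submodule.Quotient.mk_smul]
      exact hb
    have hIP : ¬ I ≤ P := by
      intro hIP
      have hxΓ : x ∈ Γ := key x (fun a ha => htor a (hIP ha))
      have h0 : (Submodule.Quotient.mk x : M ⧸ Γ) = 0 :=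
        (Submodule.Quotient.mk_eq_zero Γ).mpr hxΓ
      rw [h0, Submodule.colon_singleton_zero] at hx'
      exact hPp.ne_top hx'
    refine ⟨?_, hIP⟩
    obtain ⟨a0, ha0I, ha0P⟩ := SetLike.not_le_iff_exists.mp hIP
    obtain ⟨S, hS⟩ := IsNoetherian.noetherian P
    have hch : ∀ b ∈ P, ∃ s : ℕ, ∀ c ∈ I ^ s, c • (b • x) = 0 :=
      fun b hb => (hΓ _).mp (htor b hb)
    set g : A → ℕ := fun b => if h : b ∈ P then (hch b h).choose else 0 with hg
    set t := S.sup g with ht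
    refine ⟨hPp, a0 ^ t • x, le_antisymm ?_ ?_⟩
    · rw [← hS, Submodule.span_le]
      intro b hb
      have hbS : b ∈ S := hb
      have hbP : b ∈ P := by rw [← hS]; exact Submodule.subset_span hb
      rw [SetLike.mem_coe, Submodule.mem_colon_singleton, Submodule.mem_bot]
      have ha0t : a0 ^ t ∈ I ^ (g b) :=
        Ideal.pow_le_pow_right (Finset.le_sup hbS) (Ideal.pow_mem_pow ha0I t)
      have ha0t' : a0 ^ t ∈ I ^ ((hch b hbP).choose) := by
        have hgb : g b = (hch b hbP).choose := dif_pos hbP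
        rwa [hgb] at ha0t
      have := (hch b hbP).choose_spec _ ha0t'
      rw [smul_smul, mul_comm, ← smul_smul]
      exact this
    · intro b hb
      rw [Submodule.mem_colon_singleton, Submodule.mem_bot, smul_smul] at hb
      have : (b * a0 ^ t) • (Submodule.Quotient.mk x : M ⧸ Γ) = 0 := by
        rw [← Submodule.Quotient.mk_smul, hb, Submodule.Quotient.mk_zero]
      rw [← Submodule.mem_bot A, ← Submodule.mem_colon_singleton, ← hx'] at this
      rcases hPp.mem_or_mem this with h | h
      · exact h
      · exact absurd (hPp.mem_of_pow_mem t h) ha0P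
  · rintro ⟨⟨hPp, x, hx⟩, hIP⟩
    obtain ⟨a0, ha0I, ha0P⟩ := SetLike.not_le_iff_exists.mp hIP
    refine ⟨hPp, Submodule.Quotient.mk x, le_antisymm ?_ ?_⟩
    · intro b hb
      have hbx : b • x = 0 := by
        rw [hx, Submodule.mem_colon_singleton, Submodule.mem_bot] at hb
        exact hb
      rw [Submodule.mem_colon_singleton, Submodule.mem_bot, ← Submodule.Quotient.mk_smul, hbx,
        Submodule.Quotient.mk_zero]
    · intro b hb
      rw [Submodule.mem_colon_singleton, Submodule.mem_bot, ← Submodule.Quotient.mk_smul,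
        Submodule.Quotient.mk_eq_zero] at hb
      obtain ⟨s, hs⟩ := (hΓ _).mp hb
      have := hs (a0 ^ s) (Ideal.pow_mem_pow ha0I s)
      rw [smul_smul] at this
      have hmem : a0 ^ s * b ∈ P := by
        rw [hx, Submodule.mem_colon_singleton, Submodule.mem_bot]
        exact this
      rcases hPp.mem_or_mem hmem with h | h
      · exact absurd (hPp.mem_of_pow_mem s h) ha0P
      · exact h
end
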